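/- Let F be a field, let n, d be natural numbers, let P be a multivariate polynomial in MvPolynomial (Fin n) F whose individual degree in every variable is at most d (degreeOf i P ≤ d for all i), and let S be a finite subset of F. If there exists a point a : Fin n → F with eval a P ≠ 0 (i.e. not every point of F^n is a root of P), then the number of points b : Fin n → F with b i ∈ S for all i and eval b P = 0 is at most d · n · |S|^(n−1). -/

import Mathlib

open MvPolynomial

private lemma sz_aux (F : Type*) [Field F] [DecidableEq F] :
    ∀ (n : ℕ) (d : ℕ) (P : MvPolynomial (Fin n) F),
    (∀ i : Fin n, P.degreeOf i ≤ d) → ∀ (S : Finset F) (a : Fin n → F), eval a P ≠ 0 →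
    ((Fintype.piFinset fun _ : Fin n => S).filter
      (fun b => eval b P = 0)).card ≤ d * n * S.card ^ (n - 1) := by
  intro n
  induction n with
  | zero =>
    intro d P hdeg S a ha
    have : ∀ b : Fin 0 → F, b = a := fun b => Subsingleton.elim _ _
    rw [Finset.card_eq_zero.mpr]
    · simp
    · rw [Finset.filter_eq_empty_iff]
      intro b _
      rw [this b]
      exact ha
  | succ n ih =>
    intro d P hdeg S a ha
    -- set up the univariate view
    set Q : Polynomial (MvPolynomial (Fin n) F) := finSuccEquiv F n P with hQ
    have haQ : Polynomial.eval (a 0) (Polynomial.map (eval (Fin.tail a)) Q) ≠ 0 := by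
      rw [← eval_eq_eval_mv_eval', Fin.cons_self_tail]; exact ha
    have hQa0 : Polynomial.map (eval (Fin.tail a)) Q ≠ 0 := by
      intro h; rw [h] at haQ; simp at haQ
    obtain ⟨k, hk⟩ : ∃ k, eval (Fin.tail a) (Q.coeff k) ≠ 0 := by
      by_contra h
      push_neg at h
      apply hQa0
      ext m
      simp [Polynomial.coeff_map, h m]
    set Pk : MvPolynomial (Fin n) F := Q.coeff k with hPk
    have hPkdeg : ∀ i : Fin n, Pk.degreeOf i ≤ d := fun i =>
      (degreeOf_coeff_finSuccEquiv P i k).trans (hdeg i.succ)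
    have IH := ih d Pk hPkdeg S (Fin.tail a) hk
    -- identify the root set with a set of pairs
    classical
    set T := ((Fintype.piFinset fun _ : Fin (n+1) => S).filter (fun b => eval b P = 0))
    set U := ((S ×ˢ (Fintype.piFinset fun _ : Fin n => S)).filter
      (fun p : F × (Fin n → F) => eval (Fin.cons p.1 p.2) P = 0))
    have hcard : T.card = U.card := by
      apply Finset.card_nbij' (fun b => (b 0, Fin.tail b)) (fun p => Fin.cons p.1 p.2)
      · intro b hb
        simp only [T, U, Finset.mem_coe, Finset.mem_filter, Fintype.mem_piFinset, Finset.mem_product] at hb ⊢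
        refine ⟨⟨hb.1 0, fun i => hb.1 i.succ⟩, ?_⟩
        rw [Fin.cons_self_tail]; exact hb.2
      · intro p hp
        simp only [T, U, Finset.mem_coe, Finset.mem_filter, Fintype.mem_piFinset, Finset.mem_product] at hp ⊢
        refine ⟨fun i => ?_, hp.2⟩
        refine Fin.cases ?_ ?_ i
        · simpa using hp.1.1
        · intro j; simpa using hp.1.2 j
      · intro b _; simp [Fin.cons_self_tail]
      · intro p _; simp
    rw [hcard]
    -- split U according to whether Pk vanishes at the tail
    have hsplit : U ⊆ (S ×ˢ ((Fintype.piFinset fun _ : Fin n => S).filter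
          (fun t => eval t Pk = 0))) ∪
        ((S ×ˢ (Fintype.piFinset fun _ : Fin n => S)).filter
          (fun p : F × (Fin n → F) => eval p.2 Pk ≠ 0 ∧ eval (Fin.cons p.1 p.2) P = 0)) := by
      intro p hp
      simp only [U, Finset.mem_filter, Finset.mem_product, Finset.mem_union] at hp ⊢
      by_cases h : eval p.2 Pk = 0
      · exact Or.inl ⟨hp.1.1, hp.1.2, h⟩
      · exact Or.inr ⟨hp.1, h, hp.2⟩
    have hU1 : (S ×ˢ ((Fintype.piFinset fun _ : Fin n => S).filter
          (fun t => eval t Pk = 0))).card ≤ S.card * (d * n * S.card ^ (n - 1)) := by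
      rw [Finset.card_product]
      exact Nat.mul_le_mul_left _ IH
    have hU2 : ((S ×ˢ (Fintype.piFinset fun _ : Fin n => S)).filter
          (fun p : F × (Fin n → F) => eval p.2 Pk ≠ 0 ∧ eval (Fin.cons p.1 p.2) P = 0)).card
          ≤ S.card ^ n * d := by
      set V := ((S ×ˢ (Fintype.piFinset fun _ : Fin n => S)).filter
          (fun p : F × (Fin n → F) => eval p.2 Pk ≠ 0 ∧ eval (Fin.cons p.1 p.2) P = 0))
      have : V.card = ∑ t ∈ (Fintype.piFinset fun _ : Fin n => S),
          (V.filter (fun p => p.2 = t)).card := by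
        apply Finset.card_eq_sum_card_fiberwise
        intro p hp
        exact (Finset.mem_product.mp (Finset.mem_filter.mp hp).1).2
      rw [this]
      calc ∑ t ∈ (Fintype.piFinset fun _ : Fin n => S),
          (V.filter (fun p => p.2 = t)).card
          ≤ ∑ _t ∈ (Fintype.piFinset fun _ : Fin n => S), d := by
            apply Finset.sum_le_sum
            intro t _
            by_cases ht : eval t Pk = 0
            · rw [Finset.card_eq_zero.mpr]
              · exact Nat.zero_le d
              · rw [Finset.filter_eq_empty_iff]
                rintro p hp rfl
                simp only [V, Finset.mem_filter] at hp
                exact hp.2.1 ht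
            · -- at most d roots of a nonzero univariate polynomial
              set q : Polynomial F := Polynomial.map (eval t) Q with hq
              have hq0 : q ≠ 0 := by
                intro h
                have := Polynomial.coeff_map (eval t) k (p := Q)
                rw [← hq, h] at this
                simp only [Polynomial.coeff_zero] at this
                exact ht this.symm
              have hqd : q.natDegree ≤ d := by
                calc q.natDegree ≤ Q.natDegree := Polynomial.natDegree_map_le
                  _ = P.degreeOf 0 := natDegree_finSuccEquiv P
                  _ ≤ d := hdeg 0
              calc (V.filter (fun p => p.2 = t)).card
                  ≤ (q.roots.toFinset.card) := by
                    apply Finset.card_le_card_of_injOn Prod.fst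
                    · rintro ⟨x, t'⟩ hp
                      simp only [V, Finset.mem_coe, Finset.mem_filter, Finset.mem_product] at hp
                      obtain ⟨⟨⟨hxS, htS⟩, hne, hroot⟩, rfl⟩ := hp
                      simp only [Finset.mem_coe, Multiset.mem_toFinset, Polynomial.mem_roots hq0,
                        Polynomial.IsRoot.def]
                      rw [hq, hQ, ← eval_eq_eval_mv_eval']
                      exact hroot
                    · rintro ⟨x, t1⟩ h1 ⟨y, t2⟩ h2 hxy
                      simp only [V, Finset.coe_filter, Set.mem_setOf_eq] at h1 h2
                      simp only at hxy
                      rw [Prod.mk.injEq]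
                      exact ⟨hxy, h1.2.trans h2.2.symm⟩
                  _ ≤ Multiset.card q.roots := Multiset.toFinset_card_le _
                  _ ≤ q.natDegree := Polynomial.card_roots' q
                  _ ≤ d := hqd
        _ = S.card ^ n * d := by
            rw [Finset.sum_const, smul_eq_mul, Fintype.card_piFinset]
            simp
    calc U.card ≤ _ := Finset.card_le_card hsplit
      _ ≤ _ := Finset.card_union_le _ _
      _ ≤ S.card * (d * n * S.card ^ (n - 1)) + S.card ^ n * d := Nat.add_le_add hU1 hU2
      _ ≤ d * n * S.card ^ n + d * S.card ^ n := by
          apply Nat.add_le_add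
          · rcases Nat.eq_zero_or_pos n with rfl | hn
            · simp
            · have : S.card * (d * n * S.card ^ (n - 1)) = d * n * S.card ^ n := by
                rw [mul_comm (S.card), mul_assoc, ← pow_succ, Nat.sub_add_cancel hn]
              rw [this]
          · rw [mul_comm]
      _ = d * (n + 1) * S.card ^ ((n + 1) - 1) := by
          simp only [Nat.add_sub_cancel]
          ring

theorem schwartz_zippel_individual_degree
    (F : Type*) [Field F] [DecidableEq F] (n d : ℕ)
    (P : MvPolynomial (Fin n) F) (hdeg : ∀ i : Fin n, P.degreeOf i ≤ d)
    (S : Finset F) (a : Fin n → F) (ha : eval a P ≠ 0) :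
    ((Fintype.piFinset fun _ : Fin n => S).filter
      (fun b => eval b P = 0)).card ≤ d * n * S.card ^ (n - 1) :=
  sz_aux F n d P hdeg S a ha
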